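/- In Berlinkov's automaton A(ψ), if ψ is not satisfiable, then for every word v ∈ {a,b}* of length n there exists an index i ≤ m such that q_{i,n+1} ∈ δ(T, v), where T = {q_{i,1} : 1 ≤ i ≤ m+1}. -/

import Mathlib

/-- The three-letter alphabet {a, b, c}. -/
inductive Letter3 where
  | a | b | c
deriving DecidableEq

/-- Extension of a transition function to words (left-to-right action). -/
def runW {Q A : Type*} (δ : Q → A → Q) : Q → List A → Q
  | q, [] => q
  | q, x :: w => runW δ (δ q x) w

/-- States of Berlinkov's automaton A(ψ) for a SAT instance with m clauses and n
variables.  `q i j` encodes q_{i+1,j+1} (so `q ⟨m⟩ ⟨n⟩` is the state z₁),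
`p i j` encodes p_{i+1,j+1}, and `z0` is the zero state. -/
inductive St (m n : ℕ) where
  | q : Fin (m + 1) → Fin (n + 1) → St m n
  | p : Fin (m + 1) → Fin (n + 1) → St m n
  | z0 : St m n
deriving DecidableEq

/-- The transition function of Berlinkov's automaton A(ψ).  `pos i j` means the
literal x_{j+1} occurs in clause c_{i+1}; `neg i j` means ¬x_{j+1} occurs there. -/
def St.delta {m n : ℕ} (pos neg : Fin m → Fin n → Bool) : St m n → Letter3 → St m n
  | .q i j, .a =>
      if hj : (j : ℕ) < n then
        if hi : (i : ℕ) < m then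
          if pos ⟨i, hi⟩ ⟨j, hj⟩ then .z0 else .q i ⟨(j : ℕ) + 1, by omega⟩
        else .q i ⟨(j : ℕ) + 1, by omega⟩
      else if (i : ℕ) < m then .z0 else .q i ⟨0, by omega⟩
  | .q i j, .b =>
      if hj : (j : ℕ) < n then
        if hi : (i : ℕ) < m then
          if neg ⟨i, hi⟩ ⟨j, hj⟩ then .z0 else .q i ⟨(j : ℕ) + 1, by omega⟩
        else .q i ⟨(j : ℕ) + 1, by omega⟩
      else if (i : ℕ) < m then .z0 else .q i ⟨0, by omega⟩
  | .q i j, .c =>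
      if (j : ℕ) < n then .q i ⟨0, by omega⟩
      else if (i : ℕ) < m then .q ⟨m, by omega⟩ ⟨0, by omega⟩ else .z0
  | .p i j, x =>
      if hj : (j : ℕ) < n then .p i ⟨(j : ℕ) + 1, by omega⟩
      else match x with
        | .c => .q i ⟨0, by omega⟩
        | _ => .z0
  | .z0, _ => .z0

/-- Clause c_{i+1} is satisfied by the truth assignment τ. -/
def clauseSat {m n : ℕ} (pos neg : Fin m → Fin n → Bool) (τ : Fin n → Bool) (i : Fin m) : Prop :=
  ∃ j : Fin n, (pos i j = true ∧ τ j = true) ∨ (neg i j = true ∧ τ j = false)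

/-- The word v(τ) ∈ {a,b}ⁿ encoding a truth assignment. -/
def encWord {n : ℕ} (τ : Fin n → Bool) : List Letter3 :=
  List.ofFn fun j : Fin n => if τ j then Letter3.a else Letter3.b

lemma run_safe {m n : ℕ} (pos neg : Fin m → Fin n → Bool) (i : Fin m) :
    ∀ (v : List Letter3) (k : ℕ) (hk : k + v.length = n)
      (hcond : ∀ (l : ℕ) (hl : l < v.length),
        (v.get ⟨l, hl⟩ = .a ∧ pos i ⟨k + l, by omega⟩ = false) ∨
        (v.get ⟨l, hl⟩ = .b ∧ neg i ⟨k + l, by omega⟩ = false)),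
    runW (St.delta pos neg) (St.q i.castSucc ⟨k, by omega⟩) v
      = St.q i.castSucc ⟨n, Nat.lt_succ_self n⟩
  | [], k, hk, hcond => by
      simp at hk; subst hk; rfl
  | x :: w, k, hk, hcond => by
      have hk' : k < n := by simp at hk; omega
      have him : (i.castSucc : ℕ) < m := i.isLt
      have h0 := hcond 0 (by simp)
      have hstep : St.delta pos neg (St.q i.castSucc ⟨k, by omega⟩) x
          = St.q i.castSucc ⟨k + 1, by omega⟩ := by
        rcases h0 with ⟨hx, hp⟩ | ⟨hx, hp⟩ <;> simp at hx <;> subst hx <;>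
          simp only [Nat.add_zero] at hp <;>
          simp [St.delta, hk', him, Fin.eta, hp]
      have := run_safe pos neg i w (k + 1) (by simp at hk ⊢; omega)
        (fun l hl => by
          have := hcond (l + 1) (by simp; omega)
          simpa [Nat.add_assoc, Nat.add_comm 1 l] using this)
      simpa [runW, hstep] using this

/-- If ψ is not satisfiable then for every word v ∈ {a,b}* of length n some state
q_{i,n+1} with i ≤ m lies in the image of T = {q_{i,1} : 1 ≤ i ≤ m+1} under v. -/
theorem unsat_row_survives
    {m n : ℕ} (pos neg : Fin m → Fin n → Bool)
    (hunsat : ∀ τ : Fin n → Bool, ∃ i : Fin m, ¬ clauseSat pos neg τ i)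
    (v : List Letter3) (hv : v.length = n) (hab : Letter3.c ∉ v) :
    ∃ i : Fin (m + 1), (i : ℕ) < m ∧
      ∃ i₀ : Fin (m + 1),
        runW (St.delta pos neg) (St.q i₀ ⟨0, Nat.succ_pos n⟩) v
          = St.q i ⟨n, Nat.lt_succ_self n⟩ := by
  classical
  set τ : Fin n → Bool := fun j => decide (v.get ⟨j, by omega⟩ = Letter3.a) with hτ
  obtain ⟨i, hi⟩ := hunsat τ
  rw [clauseSat] at hi
  push_neg at hi
  refine ⟨i.castSucc, i.isLt, ⟨i.castSucc, ?_⟩⟩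
  have := run_safe pos neg i v 0 (by omega) (fun l hl => ?_)
  · exact this
  · have hmem : v.get ⟨l, hl⟩ ∈ v := List.get_mem v ⟨l, hl⟩
    have hl' : l < n := by omega
    have hcs := hi ⟨l, hl'⟩
    cases hx : v.get ⟨l, hl⟩ with
    | a =>
        left
        refine ⟨rfl, ?_⟩
        have hτl : τ ⟨l, hl'⟩ = true := by simp only [hτ, decide_eq_true_eq]; simpa using hx
        rcases hcs with ⟨h1, h2⟩
        simpa [hτl] using h1
    | b =>
        right
        refine ⟨rfl, ?_⟩
        have hτl : τ ⟨l, hl'⟩ = false := by simp only [hτ, decide_eq_false_iff_not]; simp [List.get_eq_getElem] at hx; simp [hx]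
        rcases hcs with ⟨h1, h2⟩
        simpa [hτl] using h2
    | c => exact absurd (hx ▸ hmem) hab
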